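/- Let ψ : [0,∞) → ℝ be bounded and measurable, and suppose that for every u ∈ [0,∞): c·ψ(u) = −δ·e^{au}·∫_u^∞ ψ(z)e^{−az} dz + γ·e^{−bu}·∫_0^u ψ(z)e^{bz} dz + (γ/b)·e^{−bu}. Then ψ is differentiable on [0,∞) (with the right derivative at 0), and for every u ∈ [0,∞): bc·ψ(u) + c·ψ'(u) = (δ + γ)·ψ(u) − (a+b)·δ·e^{au}·∫_u^∞ ψ(z)e^{−az} dz. -/

import Mathlib

open MeasureTheory Set

/-- If `ψ : [0,∞) → ℝ` is bounded and measurable and satisfies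
`c ψ(u) = -δ e^{au} ∫_u^∞ ψ(z)e^{-az} dz + γ e^{-bu} ∫_0^u ψ(z)e^{bz} dz + (γ/b) e^{-bu}`
for all `u ≥ 0`, then `ψ` is differentiable on `[0,∞)` (right derivative at `0`) and
`bc ψ(u) + c ψ'(u) = (δ+γ) ψ(u) - (a+b) δ e^{au} ∫_u^∞ ψ(z)e^{-az} dz` for all `u ≥ 0`. -/
theorem differentiable_of_integral_equation
    (a b γ δ c : ℝ) (ha : 0 < a) (hb : 0 < b) (hγ : 0 < γ) (hδ : 0 < δ) (hc : 0 < c)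
    (ψ : ℝ → ℝ) (hmeas : Measurable ψ)
    (hbdd : ∃ M : ℝ, ∀ u : ℝ, 0 ≤ u → |ψ u| ≤ M)
    (heq : ∀ u : ℝ, 0 ≤ u →
      c * ψ u = -δ * Real.exp (a * u) * (∫ z in Ioi u, ψ z * Real.exp (-(a * z)))
        + γ * Real.exp (-(b * u)) * (∫ z in (0:ℝ)..u, ψ z * Real.exp (b * z))
        + (γ / b) * Real.exp (-(b * u))) :
    ∃ ψ' : ℝ → ℝ, ∀ u : ℝ, 0 ≤ u →
      HasDerivWithinAt ψ (ψ' u) (Ici 0) u ∧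
      b * c * ψ u + c * ψ' u
        = (δ + γ) * ψ u
          - (a + b) * δ * Real.exp (a * u) * (∫ z in Ioi u, ψ z * Real.exp (-(a * z))) := by
  obtain ⟨M, hM⟩ := hbdd
  set f : ℝ → ℝ := fun z => ψ z * Real.exp (-(a * z)) with hf_def
  set g : ℝ → ℝ := fun z => ψ z * Real.exp (b * z) with hg_def
  have hfmeas : Measurable f := by fun_prop
  have hgmeas : Measurable g := by fun_prop
  -- integrability of f on Ioi u
  have hfint : ∀ u : ℝ, 0 ≤ u → IntegrableOn f (Ioi u) := by
    intro u hu
    refine ((exp_neg_integrableOn_Ioi u ha).const_mul M).mono'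
      hfmeas.aestronglyMeasurable ?_
    filter_upwards [ae_restrict_mem measurableSet_Ioi] with z hz
    have hz0 : 0 ≤ z := le_of_lt (lt_of_le_of_lt hu hz)
    have h1 : |ψ z| ≤ M := hM z hz0
    have h2 : (0:ℝ) < Real.exp (-(a * z)) := Real.exp_pos _
    calc ‖f z‖ = |ψ z| * Real.exp (-(a * z)) := by
          rw [hf_def]; simp [Real.norm_eq_abs, abs_mul, abs_of_pos h2]
      _ ≤ M * Real.exp (-(a * z)) := by nlinarith
      _ = M * Real.exp (-a * z) := by ring_nf
  -- integrability of f and g on Icc 0 v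
  have hfintIcc : ∀ v : ℝ, IntegrableOn f (Icc 0 v) := by
    intro v
    rw [integrableOn_Icc_iff_integrableOn_Ioc]
    exact (hfint 0 le_rfl).mono_set Ioc_subset_Ioi_self
  have hgintIcc : ∀ v : ℝ, 0 ≤ v → IntegrableOn g (Icc 0 v) := by
    intro v hv
    refine ((integrableOn_const (C := M * Real.exp (b * v))
      measure_Icc_lt_top.ne)).mono' hgmeas.aestronglyMeasurable ?_
    filter_upwards [ae_restrict_mem measurableSet_Icc] with z hz
    have h1 : |ψ z| ≤ M := hM z hz.1
    have h2 : Real.exp (b * z) ≤ Real.exp (b * v) :=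
      Real.exp_le_exp.2 (by nlinarith [hz.2])
    have h3 : (0:ℝ) < Real.exp (b * z) := Real.exp_pos _
    calc ‖g z‖ = |ψ z| * Real.exp (b * z) := by
          rw [hg_def]; simp [Real.norm_eq_abs, abs_mul, abs_of_pos h3]
      _ ≤ M * Real.exp (b * v) := by nlinarith [abs_nonneg (ψ z)]
  have hfii : ∀ v : ℝ, 0 ≤ v → IntervalIntegrable f volume 0 v := fun v hv =>
    (intervalIntegrable_iff_integrableOn_Icc_of_le hv).2 (hfintIcc v)
  have hgii : ∀ v : ℝ, 0 ≤ v → IntervalIntegrable g volume 0 v := fun v hv =>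
    (intervalIntegrable_iff_integrableOn_Icc_of_le hv).2 (hgintIcc v hv)
  -- splitting of the Ioi integral
  have hsplit : ∀ v : ℝ, 0 ≤ v →
      (∫ z in Ioi v, f z) = (∫ z in Ioi (0:ℝ), f z) - ∫ t in (0:ℝ)..v, f t := by
    intro v hv
    rw [intervalIntegral.integral_of_le hv, eq_sub_iff_add_eq, add_comm,
      ← setIntegral_union (Ioc_disjoint_Ioi le_rfl) measurableSet_Ioi
        ((hfint 0 le_rfl).mono_set Ioc_subset_Ioi_self) (hfint v hv),
      Ioc_union_Ioi_eq_Ioi hv]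
  -- primitives
  set P : ℝ → ℝ := fun v => ∫ t in (0:ℝ)..v, f t with hP_def
  set Q : ℝ → ℝ := fun v => ∫ t in (0:ℝ)..v, g t with hQ_def
  set F0 : ℝ := ∫ z in Ioi (0:ℝ), f z with hF0_def
  -- continuity of the primitives within Ici 0
  have hPcont : ∀ u : ℝ, 0 ≤ u → ContinuousWithinAt P (Ici 0) u := by
    intro u hu
    have h1 : Icc (0:ℝ) (u + 1) ∈ nhdsWithin u (Ici 0) := by
      rw [← Ici_inter_Iic]
      exact Filter.inter_mem self_mem_nhdsWithin
        (mem_nhdsWithin_of_mem_nhds (Iic_mem_nhds (lt_add_one u)))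
    have h2 : ContinuousOn P (uIcc (0:ℝ) (u + 1)) :=
      intervalIntegral.continuousOn_primitive_interval
        ((hfintIcc (u + 1)).mono_set (by rw [uIcc_of_le (by linarith)]))
    rw [uIcc_of_le (by linarith : (0:ℝ) ≤ u + 1)] at h2
    exact (h2 u ⟨hu, by linarith⟩).mono_of_mem_nhdsWithin h1
  have hQcont : ∀ u : ℝ, 0 ≤ u → ContinuousWithinAt Q (Ici 0) u := by
    intro u hu
    have h1 : Icc (0:ℝ) (u + 1) ∈ nhdsWithin u (Ici 0) := by
      rw [← Ici_inter_Iic]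
      exact Filter.inter_mem self_mem_nhdsWithin
        (mem_nhdsWithin_of_mem_nhds (Iic_mem_nhds (lt_add_one u)))
    have h2 : ContinuousOn Q (uIcc (0:ℝ) (u + 1)) :=
      intervalIntegral.continuousOn_primitive_interval
        ((hgintIcc (u + 1) (by linarith)).mono_set (by rw [uIcc_of_le (by linarith)]))
    rw [uIcc_of_le (by linarith : (0:ℝ) ≤ u + 1)] at h2
    exact (h2 u ⟨hu, by linarith⟩).mono_of_mem_nhdsWithin h1
  -- ψ expressed via the primitives, on Ici 0
  have hψeq : ∀ v : ℝ, 0 ≤ v → ψ v = c⁻¹ * (-δ * Real.exp (a * v) * (F0 - P v)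
      + γ * Real.exp (-(b * v)) * Q v + (γ / b) * Real.exp (-(b * v))) := by
    intro v hv
    rw [← hsplit v hv, ← heq v hv, inv_mul_cancel_left₀ hc.ne']
  -- continuity of ψ within Ici 0
  have hψcont : ∀ u : ℝ, 0 ≤ u → ContinuousWithinAt ψ (Ici 0) u := by
    intro u hu
    have : ContinuousWithinAt (fun v => c⁻¹ * (-δ * Real.exp (a * v) * (F0 - P v)
        + γ * Real.exp (-(b * v)) * Q v + (γ / b) * Real.exp (-(b * v)))) (Ici 0) u := by
      refine continuousWithinAt_const.mul ?_
      exact (((continuousWithinAt_const.mul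
          ((Real.continuous_exp.comp (continuous_const.mul continuous_id)).continuousWithinAt)).mul
            (continuousWithinAt_const.sub (hPcont u hu))).add
        ((continuousWithinAt_const.mul
          ((Real.continuous_exp.comp (continuous_const.mul continuous_id).neg).continuousWithinAt)).mul
            (hQcont u hu))).add
        (continuousWithinAt_const.mul
          ((Real.continuous_exp.comp (continuous_const.mul continuous_id).neg).continuousWithinAt))
    exact this.congr (fun v hv => hψeq v hv) (hψeq u hu)
  -- derivative of P and Q within Ici 0
  have hfcont : ∀ u : ℝ, 0 ≤ u → ContinuousWithinAt f (Ici 0) u := fun u hu =>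
    (hψcont u hu).mul
      ((Real.continuous_exp.comp (continuous_const.mul continuous_id).neg).continuousWithinAt)
  have hgcont : ∀ u : ℝ, 0 ≤ u → ContinuousWithinAt g (Ici 0) u := fun u hu =>
    (hψcont u hu).mul
      ((Real.continuous_exp.comp (continuous_const.mul continuous_id)).continuousWithinAt)
  have key : ∀ (h : ℝ → ℝ), Measurable h →
      (∀ v : ℝ, 0 ≤ v → IntervalIntegrable h volume 0 v) →
      (∀ u : ℝ, 0 ≤ u → ContinuousWithinAt h (Ici 0) u) →
      ∀ u : ℝ, 0 ≤ u →
        HasDerivWithinAt (fun v => ∫ t in (0:ℝ)..v, h t) (h u) (Ici 0) u := by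
    intro h hhm hhi hhc u hu
    rcases eq_or_lt_of_le hu with rfl | hu'
    · exact intervalIntegral.integral_hasDerivWithinAt_right (t := Ioi 0)
        (hhi 0 le_rfl) ⟨univ, Filter.univ_mem,
          hhm.aestronglyMeasurable.restrict⟩
        ((hhc 0 le_rfl).mono Ioi_subset_Ici_self)
    · have hIci : Ici (0:ℝ) ∈ nhds u := Ici_mem_nhds hu'
      have hCA : ContinuousAt h u := (hhc u hu).continuousAt hIci
      exact (intervalIntegral.integral_hasDerivAt_right (hhi u hu)
        ⟨univ, Filter.univ_mem, hhm.aestronglyMeasurable.restrict⟩ hCA).hasDerivWithinAt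
  -- now build the derivative
  refine ⟨fun u => c⁻¹ * (-δ * (Real.exp (a * u) * a * (F0 - P u)
      + Real.exp (a * u) * (0 - f u))
      + γ * (Real.exp (-(b * u)) * (-b) * Q u + Real.exp (-(b * u)) * g u)
      + γ / b * (Real.exp (-(b * u)) * (-b))), fun u hu => ?_⟩
  have hP' : HasDerivWithinAt P (f u) (Ici 0) u := key f hfmeas hfii hfcont u hu
  have hQ' : HasDerivWithinAt Q (g u) (Ici 0) u := key g hgmeas hgii hgcont u hu
  have hEa : HasDerivWithinAt (fun v => Real.exp (a * v)) (Real.exp (a * u) * a) (Ici 0) u := by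
    have := (Real.hasDerivAt_exp (a * u)).comp u
      (((hasDerivAt_id u).const_mul a) : HasDerivAt (fun v => a * v) (a * 1) u)
    simp only [mul_one] at this
    exact this.hasDerivWithinAt
  have hEb : HasDerivWithinAt (fun v => Real.exp (-(b * v)))
      (Real.exp (-(b * u)) * (-b)) (Ici 0) u := by
    have := (Real.hasDerivAt_exp (-(b * u))).comp u
      ((((hasDerivAt_id u).const_mul b).neg) : HasDerivAt (fun v => -(b * v)) (-(b * 1)) u)
    simp only [mul_one] at this
    exact this.hasDerivWithinAt
  have hΦ : HasDerivWithinAt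
      (fun v => -δ * (Real.exp (a * v) * (F0 - P v))
        + γ * (Real.exp (-(b * v)) * Q v) + γ / b * Real.exp (-(b * v)))
      (-δ * (Real.exp (a * u) * a * (F0 - P u) + Real.exp (a * u) * (0 - f u))
        + γ * (Real.exp (-(b * u)) * (-b) * Q u + Real.exp (-(b * u)) * g u)
        + γ / b * (Real.exp (-(b * u)) * (-b))) (Ici 0) u :=
    (((hEa.mul ((hasDerivWithinAt_const u (Ici (0:ℝ)) F0).sub hP')).const_mul (-δ)).add
      ((hEb.mul hQ').const_mul γ)).add (hEb.const_mul (γ / b))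
  have hd : HasDerivWithinAt ψ (c⁻¹ * (-δ * (Real.exp (a * u) * a * (F0 - P u)
      + Real.exp (a * u) * (0 - f u))
      + γ * (Real.exp (-(b * u)) * (-b) * Q u + Real.exp (-(b * u)) * g u)
      + γ / b * (Real.exp (-(b * u)) * (-b)))) (Ici 0) u := by
    refine (hΦ.const_mul c⁻¹).congr (fun v hv => ?_) ?_
    · rw [hψeq v hv]; ring
    · rw [hψeq u hu]; ring
  refine ⟨hd, ?_⟩
  have hFu : (∫ z in Ioi u, f z) = F0 - P u := hsplit u hu
  have hH := heq u hu
  rw [hFu] at hH ⊢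
  have h1 : Real.exp (a * u) * Real.exp (-(a * u)) = 1 := by
    rw [← Real.exp_add]; ring_nf; exact Real.exp_zero
  have h2 : Real.exp (b * u) * Real.exp (-(b * u)) = 1 := by
    rw [← Real.exp_add]; ring_nf; exact Real.exp_zero
  have hfu : f u = ψ u * Real.exp (-(a * u)) := rfl
  have hgu : g u = ψ u * Real.exp (b * u) := rfl
  rw [mul_inv_cancel_left₀ hc.ne']
  linear_combination b * hH + δ * Real.exp (a * u) * hfu
    + γ * Real.exp (-(b * u)) * hgu + δ * ψ u * h1 + γ * ψ u * h2
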